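/- arXiv:1907.08050 — 7 statements merged into one kernel-verified Lean document; each statement's English description precedes it below -/
import Mathlib

section
/- Let (Ш, →, ↠, ↪) be a two-acyclic factorization system. For any x ∈ Ш, T(x) = ^⊥({x}^⊥) and F(x) = (^⊥{x})^⊥. Moreover, x is uniquely determined by T(x), and x is uniquely determined by F(x) (i.e., T(x₁) = T(x₂) implies x₁ = x₂, and F(x₁) = F(x₂) implies x₁ = x₂). -/
namespace SDL

variable {S : Type*} {L : Type*}

/-- `X^⊥ = {y | x ↛ y for all x ∈ X}` -/
def perpR (r : S → S → Prop) (X : Set S) : Set S := {y | ∀ x ∈ X, ¬ r x y}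

/-- `^⊥Y = {x | x ↛ y for all y ∈ Y}` -/
def perpL (r : S → S → Prop) (Y : Set S) : Set S := {x | ∀ y ∈ Y, ¬ r x y}

/-- `(X, Y)` is a maximal orthogonal pair for `r`. -/
def IsMOP (r : S → S → Prop) (X Y : Set S) : Prop := Y = perpR r X ∧ X = perpL r Y

/-- The set of maximal orthogonal pairs. -/
def Pairs (r : S → S → Prop) : Type _ := {p : Set S × Set S // IsMOP r p.1 p.2}

/-- `Pairs r` is ordered by containment in the first component. -/
instance (r : S → S → Prop) : PartialOrder (Pairs r) where
  le p q := p.val.1 ⊆ q.val.1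
  le_refl _ := Set.Subset.rfl
  le_trans _ _ _ h h' := Set.Subset.trans h h'
  le_antisymm p q h h' := by
    apply Subtype.ext
    have h1 : p.val.1 = q.val.1 := subset_antisymm h h'
    have h2 : p.val.2 = q.val.2 := by rw [p.prop.1, q.prop.1, h1]
    exact Prod.ext h1 h2

/-- `x ↠ y` iff for all `z`, `y → z` implies `x → z`. -/
def Onto (r : S → S → Prop) (x y : S) : Prop := ∀ z, r y z → r x z

/-- `x ↪ y` iff for all `z`, `z → x` implies `z → y`. -/
def Into (r : S → S → Prop) (x y : S) : Prop := ∀ z, r z x → r z y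

/-- `Mult ↠ ↪` relates `x` to `z` iff `x ↠ y ↪ z` for some `y`. -/
def Mult (ont inj : S → S → Prop) (x z : S) : Prop := ∃ y, ont x y ∧ inj y z

/-- `(S, r, ont, inj)` is a factorization system. -/
structure IsFactSystem (r ont inj : S → S → Prop) : Prop where
  refl : ∀ x, r x x
  onto_iff : ∀ x y, ont x y ↔ Onto r x y
  into_iff : ∀ x y, inj x y ↔ Into r x y
  mult_iff : ∀ x z, r x z ↔ Mult ont inj x z

/-- A two-acyclic factorization system. -/
structure IsTwoAcyclicFS (r ont inj : S → S → Prop) extends IsFactSystem r ont inj : Prop where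
  onto_antisymm : ∀ x y, ont x y → ont y x → x = y
  into_antisymm : ∀ x y, inj x y → inj y x → x = y
  brick : ∀ x y, ont x y → inj y x → x = y

/-- `T(x) = {x' | x ↠ x'}`. -/
def Tset (ont : S → S → Prop) (x : S) : Set S := {x' | ont x x'}

/-- `F(x) = {x' | x' ↪ x}`. -/
def Fset (inj : S → S → Prop) (x : S) : Set S := {x' | inj x' x}

/-- Restriction of a relation to a subset. -/
def restrictRel (r : S → S → Prop) (D : Set S) : D → D → Prop := fun a b => r a b

/-- A subset is closed if it equals its closure `^⊥(X^⊥)`. -/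
def IsClosedSet (r : S → S → Prop) (X : Set S) : Prop := perpL r (perpR r X) = X

/-- The lattice of closed sets, ordered by containment. -/
abbrev Closeds (r : S → S → Prop) : Type _ := {X : Set S // IsClosedSet r X}

/-- `Del(X, c) = X \ {x ∈ X : x ↠ c}`. -/
def Del (ont : S → S → Prop) (X : Set S) (c : S) : Set S := X \ {x | ont x c}

/-- `Cov(X)`: those `c ∈ X` with `Del(X,c)` closed and the closure of `Del(X,c) ∪ {c}` equal
to `X`. -/
def CovS (r ont : S → S → Prop) (X : Set S) : Set S :=
  {c | c ∈ X ∧ IsClosedSet r (Del ont X c) ∧ perpL r (perpR r (Del ont X c ∪ {c})) = X}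

/-- Direct forcing: `x ⇝ y` iff `x` is `↠`-minimal in `F(y)` or `↪`-maximal in `T(y)`. -/
def Forces (ont inj : S → S → Prop) (x y : S) : Prop :=
  (inj x y ∧ ∀ x', inj x' y → ont x x' → x' = x) ∨
  (ont y x ∧ ∀ x', ont y x' → inj x' x → x' = x)

/-- `down X` for a partial order given as a relation (`r x y` meaning `x ≥ y`). -/
def dnRel (r : S → S → Prop) (X : Set S) : Set S := {y | ∃ x ∈ X, r x y}

/-- `up X` for a partial order given as a relation (`r x y` meaning `x ≥ y`). -/
def upRel (r : S → S → Prop) (X : Set S) : Set S := {y | ∃ x ∈ X, r y x}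

section OrderNotions

variable [PartialOrder L]

/-- Completely join-irreducible: there is `j⁎` such that `x < j ↔ x ≤ j⁎`. -/
def CJIrr (j : L) : Prop := ∃ j', ∀ x : L, x < j ↔ x ≤ j'

/-- Completely meet-irreducible: there is `j^*` such that `x > m ↔ x ≥ m^*`. -/
def CMIrr (m : L) : Prop := ∃ m', ∀ x : L, m < x ↔ m' ≤ x

/-- `k = κ(j)`: `k` is the greatest element of `{y | j ⊓ y = j⁎}`. -/
def IsKappa (j k : L) : Prop :=
  ∃ j', (∀ x : L, x < j ↔ x ≤ j') ∧ IsGreatest {y : L | IsGLB ({j, y} : Set L) j'} k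

/-- `k = κᵈ(m)`: `k` is the least element of `{x | m ⊔ x = m^*}`. -/
def IsKappad (m k : L) : Prop :=
  ∃ m', (∀ x : L, m < x ↔ m' ≤ x) ∧ IsLeast {x : L | IsLUB ({m, x} : Set L) m'} k

/-- `L` is a κ-lattice: complete, meet and join generated by irreducibles, with inverse
bijections `κ` and `κᵈ` between the completely join- and meet-irreducibles. -/
def IsKappaLattice (L : Type*) [PartialOrder L] : Prop :=
  (∀ s : Set L, ∃ a, IsLUB s a) ∧
  (∀ s : Set L, ∃ a, IsGLB s a) ∧
  (∀ x : L, IsLUB {j : L | CJIrr j ∧ j ≤ x} x) ∧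
  (∀ x : L, IsGLB {m : L | CMIrr m ∧ x ≤ m} x) ∧
  (∀ j : L, CJIrr j → ∃ k, IsKappa j k ∧ CMIrr k ∧ IsKappad k j) ∧
  (∀ m : L, CMIrr m → ∃ k, IsKappad m k ∧ CJIrr k ∧ IsKappa k m)

/-- Well separated: `z₁ ≰ z₂` implies some completely join-irreducible `j` has `j ≤ z₁` and
`κ(j) ≥ z₂`. -/
def WellSeparated (L : Type*) [PartialOrder L] : Prop :=
  ∀ z₁ z₂ : L, ¬ z₁ ≤ z₂ → ∃ j k : L, CJIrr j ∧ IsKappa j k ∧ j ≤ z₁ ∧ z₂ ≤ k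

/-- The set of completely join-irreducible elements, as a type. -/
abbrev JIrrC (L : Type*) [PartialOrder L] : Type _ := {j : L // CJIrr j}

/-- `i →_L j` iff `i ≰ κ(j)`. -/
def toL (i j : JIrrC L) : Prop := ∃ k : L, IsKappa (j : L) k ∧ ¬ (i : L) ≤ k

/-- `i ↠_L j` iff `i ≥ j` in `L`. -/
def ontoL (i j : JIrrC L) : Prop := (j : L) ≤ (i : L)

/-- `i ↪_L j` iff `κ(i) ≥ κ(j)` in `L`. -/
def intoL (i j : JIrrC L) : Prop :=
  ∃ ki kj : L, IsKappa (i : L) ki ∧ IsKappa (j : L) kj ∧ kj ≤ ki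

/-- A poset is a semidistributive lattice (order-theoretically): binary joins and meets exist,
and both semidistributive laws hold. -/
def IsSDLattice (L : Type*) [PartialOrder L] : Prop :=
  (∀ x y : L, ∃ s, IsLUB ({x, y} : Set L) s) ∧
  (∀ x y : L, ∃ s, IsGLB ({x, y} : Set L) s) ∧
  (∀ x y z sxy sxz myz : L, IsLUB ({x, y} : Set L) sxy → IsLUB ({x, z} : Set L) sxz →
    sxy = sxz → IsGLB ({y, z} : Set L) myz → IsLUB ({x, myz} : Set L) sxy) ∧
  (∀ x y z mxy mxz syz : L, IsGLB ({x, y} : Set L) mxy → IsGLB ({x, z} : Set L) mxz →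
    mxy = mxz → IsLUB ({y, z} : Set L) syz → IsGLB ({x, syz} : Set L) mxy)

/-- `s` is the canonical join representation of `x`. -/
def IsCanonicalJoinRep (s : Set L) (x : L) : Prop :=
  IsLUB s x ∧ (∀ s' : Set L, IsLUB s' x → ∀ a ∈ s, ∃ b ∈ s', a ≤ b) ∧
  IsAntichain (· ≤ ·) s

end OrderNotions

/-- Join semidistributivity. -/
def JoinSD (L : Type*) [Lattice L] : Prop :=
  ∀ x y z : L, x ⊔ y = x ⊔ z → x ⊔ (y ⊓ z) = x ⊔ y

/-- Meet semidistributivity. -/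
def MeetSD (L : Type*) [Lattice L] : Prop :=
  ∀ x y z : L, x ⊓ y = x ⊓ z → x ⊓ (y ⊔ z) = x ⊓ y

/-- Complete join semidistributivity. -/
def CompletelyJoinSD (L : Type*) [CompleteLattice L] : Prop :=
  ∀ (X : Set L) (y z : L), X.Nonempty → (∀ x ∈ X, x ⊔ y = z) → sInf X ⊔ y = z

/-- Complete meet semidistributivity. -/
def CompletelyMeetSD (L : Type*) [CompleteLattice L] : Prop :=
  ∀ (X : Set L) (y z : L), X.Nonempty → (∀ x ∈ X, x ⊓ y = z) → sSup X ⊓ y = z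

end SDL

namespace SDL

/-- Proposition 2.9: in a two-acyclic factorization system, `T(x) = ^⊥({x}^⊥)`,
`F(x) = (^⊥{x})^⊥`, and `x` is determined by `T(x)` and by `F(x)`. -/
theorem Tset_Fset_closures (S : Type u) (r ont inj : S → S → Prop)
    (h : IsTwoAcyclicFS r ont inj) :
    (∀ x, Tset ont x = perpL r (perpR r {x})) ∧
    (∀ x, Fset inj x = perpR r (perpL r {x})) ∧
    (∀ x₁ x₂, Tset ont x₁ = Tset ont x₂ → x₁ = x₂) ∧
    (∀ x₁ x₂, Fset inj x₁ = Fset inj x₂ → x₁ = x₂) := by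
  have hT : ∀ x, Tset ont x = perpL r (perpR r {x}) := by
    intro x
    ext t
    simp only [Tset, perpL, perpR, Set.mem_setOf_eq, Set.mem_singleton_iff]
    rw [h.onto_iff]
    constructor
    · intro ho y hy hty
      exact hy x rfl (ho y hty)
    · intro hp z htz
      by_contra hxz
      exact hp z (fun a ha => ha ▸ hxz) htz
  have hF : ∀ x, Fset inj x = perpR r (perpL r {x}) := by
    intro x
    ext t
    simp only [Fset, perpR, perpL, Set.mem_setOf_eq, Set.mem_singleton_iff]
    rw [h.into_iff]
    constructor
    · intro hi y hy hyt
      exact hy x rfl (hi y hyt)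
    · intro hp z hzt
      by_contra hzx
      exact hp z (fun a ha => ha ▸ hzx) hzt
  have ontRefl : ∀ x, ont x x := fun x => (h.onto_iff x x).2 (fun z hz => hz)
  have injRefl : ∀ x, inj x x := fun x => (h.into_iff x x).2 (fun z hz => hz)
  refine ⟨hT, hF, ?_, ?_⟩
  · intro x₁ x₂ he
    have h21 : ont x₂ x₁ := by
      have : x₁ ∈ Tset ont x₂ := he ▸ ontRefl x₁
      exact this
    have h12 : ont x₁ x₂ := by
      have : x₂ ∈ Tset ont x₁ := he ▸ ontRefl x₂
      exact this
    exact h.onto_antisymm _ _ h12 h21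
  · intro x₁ x₂ he
    have h12 : inj x₁ x₂ := by
      have : x₁ ∈ Fset inj x₂ := he ▸ injRefl x₁
      exact this
    have h21 : inj x₂ x₁ := by
      have : x₂ ∈ Fset inj x₁ := he ▸ injRefl x₂
      exact this
    exact h.into_antisymm _ _ h12 h21

end SDL
end

section
/- Let (Ш, →, ↠, ↪) be a two-acyclic factorization system. Then: (1) the completely join-irreducible elements of Pairs(→) are exactly the pairs (T(x), T(x)^⊥) for x ∈ Ш, and the unique element covered by (T(x), T(x)^⊥) is (T_*(x), T_*(x)^⊥); (2) the completely meet-irreducible elements of Pairs(→) are exactly the pairs (^⊥F(x), F(x)) for x ∈ Ш, and the unique element covering (^⊥F(x), F(x)) is (^⊥F^*(x), F^*(x)). -/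
namespace SDL

section Aux

variable {S : Type*} {r ont inj : S → S → Prop}

lemma perpR_antitone' {X X' : Set S} (hXX : X ⊆ X') : perpR r X' ⊆ perpR r X :=
  fun y hy x hx => hy x (hXX hx)

lemma perpL_antitone' {Y Y' : Set S} (hYY : Y ⊆ Y') : perpL r Y' ⊆ perpL r Y :=
  fun x hx y hy => hx y (hYY hy)

lemma subset_perpL_perpR' (X : Set S) : X ⊆ perpL r (perpR r X) :=
  fun x hx y hy => hy x hx

lemma subset_perpR_perpL' (Y : Set S) : Y ⊆ perpR r (perpL r Y) :=
  fun y hy x hx => hx y hy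

lemma Pairs.ext1 {p q : Pairs r} (h1 : p.val.1 = q.val.1) : p = q := by
  apply Subtype.ext
  exact Prod.ext h1 (by rw [p.prop.1, q.prop.1, h1])

lemma Pairs.ext2 {p q : Pairs r} (h2 : p.val.2 = q.val.2) : p = q := by
  apply Subtype.ext
  exact Prod.ext (by rw [p.prop.2, q.prop.2, h2]) h2

lemma Pairs.le_iff {p q : Pairs r} : p ≤ q ↔ p.val.1 ⊆ q.val.1 := Iff.rfl

lemma Pairs.le_iff2 {p q : Pairs r} : p ≤ q ↔ q.val.2 ⊆ p.val.2 := by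
  constructor
  · intro hle
    rw [p.prop.1, q.prop.1]
    exact perpR_antitone' hle
  · intro hle
    rw [Pairs.le_iff, p.prop.2, q.prop.2]
    exact perpL_antitone' hle

lemma ont_refl (h : IsTwoAcyclicFS r ont inj) (x : S) : ont x x := (h.onto_iff x x).2 fun _ hz => hz

lemma inj_refl (h : IsTwoAcyclicFS r ont inj) (x : S) : inj x x := (h.into_iff x x).2 fun _ hz => hz

lemma ont_trans (h : IsTwoAcyclicFS r ont inj) {x y z : S} (a : ont x y) (b : ont y z) : ont x z :=
  (h.onto_iff x z).2 fun w hw => (h.onto_iff x y).1 a w ((h.onto_iff y z).1 b w hw)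

lemma inj_trans (h : IsTwoAcyclicFS r ont inj) {x y z : S} (a : inj x y) (b : inj y z) : inj x z :=
  (h.into_iff x z).2 fun w hw => (h.into_iff y z).1 b w ((h.into_iff x y).1 a w hw)

lemma keyT (h : IsTwoAcyclicFS r ont inj) {x x' : S} (a : ont x x') (b : r x' x) : x' = x := by
  obtain ⟨w, hw1, hw2⟩ := (h.mult_iff x' x).1 b
  have hxw : ont x w := ont_trans h a hw1
  have hwx : w = x := (h.brick x w hxw hw2).symm
  exact h.onto_antisymm x' x ((hwx.symm) ▸ hw1) a

lemma keyF (h : IsTwoAcyclicFS r ont inj) {x v : S} (a : inj v x) (b : r x v) : v = x := by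
  obtain ⟨u, hu1, hu2⟩ := (h.mult_iff x v).1 b
  have hux' : inj u x := inj_trans h hu2 a
  have hux : u = x := (h.brick x u hu1 hux').symm
  exact h.into_antisymm v x a (hux ▸ hu2)

lemma perpR_Tset (h : IsTwoAcyclicFS r ont inj) (x : S) : perpR r (Tset ont x) = {y | ¬ r x y} := by
  ext y
  constructor
  · intro hy
    exact hy x (ont_refl h x)
  · intro hy x' hx' hr
    exact hy ((h.onto_iff x x').1 hx' y hr)

lemma perpL_perpR_Tset (h : IsTwoAcyclicFS r ont inj) (x : S) : perpL r {y | ¬ r x y} = Tset ont x := by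
  ext w
  constructor
  · intro hw
    refine (h.onto_iff x w).2 fun z hz => ?_
    by_contra hc
    exact hw z hc hz
  · intro hw y hy hr
    exact hy ((h.onto_iff x w).1 hw y hr)

/-- The pair `(T(x), T(x)^⊥)`. -/
def pairT (h : IsTwoAcyclicFS r ont inj) (x : S) : Pairs r :=
  ⟨(Tset ont x, {y | ¬ r x y}), (perpR_Tset h x).symm, (perpL_perpR_Tset h x).symm⟩

lemma x_mem_perpR_Tstar (h : IsTwoAcyclicFS r ont inj) (x : S) : x ∈ perpR r (Tset ont x \ {x}) := by
  intro x' hx' hr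
  exact hx'.2 (keyT h hx'.1 hr)

lemma Tstar_closed (h : IsTwoAcyclicFS r ont inj) (x : S) :
    perpL r (perpR r (Tset ont x \ {x})) = Tset ont x \ {x} := by
  apply Set.Subset.antisymm
  · intro w hw
    constructor
    · have h2 : perpL r (perpR r (Tset ont x \ {x})) ⊆ perpL r (perpR r (Tset ont x)) :=
        perpL_antitone' (perpR_antitone' Set.diff_subset)
      have hw2 := h2 hw
      rw [perpR_Tset h, perpL_perpR_Tset h] at hw2
      exact hw2
    · intro hwx
      simp only [Set.mem_singleton_iff] at hwx
      subst hwx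
      exact (hw w (x_mem_perpR_Tstar h w)) (h.refl w)
  · exact subset_perpL_perpR' _

/-- The pair `(T⁎(x), T⁎(x)^⊥)`. -/
def pairTstar (h : IsTwoAcyclicFS r ont inj) (x : S) : Pairs r :=
  ⟨(Tset ont x \ {x}, perpR r (Tset ont x \ {x})), rfl, (Tstar_closed h x).symm⟩

lemma mem_fst_down (h : IsTwoAcyclicFS r ont inj) {p : Pairs r} {x x' : S} (hx : x ∈ p.val.1) (ho : ont x x') :
    x' ∈ p.val.1 := by
  rw [p.prop.2] at hx ⊢
  intro y hy hr
  exact hx y hy ((h.onto_iff x x').1 ho y hr)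

lemma mem_snd_down (h : IsTwoAcyclicFS r ont inj) {p : Pairs r} {y y' : S} (hy : y ∈ p.val.2) (hi : inj y' y) :
    y' ∈ p.val.2 := by
  rw [p.prop.1] at hy ⊢
  intro z hz hr
  exact hy z hz ((h.into_iff y' y).1 hi z hr)

lemma lt_pairT_iff (h : IsTwoAcyclicFS r ont inj) (x : S) (q : Pairs r) : q < pairT h x ↔ q ≤ pairTstar h x := by
  constructor
  · intro hlt
    have hle : q.val.1 ⊆ Tset ont x := le_of_lt hlt
    intro w hw
    refine ⟨hle hw, ?_⟩
    intro hwx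
    simp only [Set.mem_singleton_iff] at hwx
    rw [hwx] at hw
    have hTq : Tset ont x ⊆ q.val.1 := fun x' hx' => mem_fst_down h hw hx'
    exact (ne_of_lt hlt) (Pairs.ext1 (Set.Subset.antisymm hle hTq))
  · intro hle
    have h1 : q ≤ pairT h x := fun w hw => (hle hw).1
    rcases eq_or_lt_of_le h1 with he | hl
    · exfalso
      have : x ∈ q.val.1 := by rw [he]; exact ont_refl h x
      exact (hle this).2 rfl
    · exact hl

lemma pairTstar_lt_pairT (h : IsTwoAcyclicFS r ont inj) (x : S) : pairTstar h x < pairT h x :=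
  (lt_pairT_iff h x _).2 le_rfl

lemma covby_pairT_iff (h : IsTwoAcyclicFS r ont inj) (x : S) (q : Pairs r) : q ⋖ pairT h x ↔ q = pairTstar h x := by
  constructor
  · intro hc
    have h1 : q ≤ pairTstar h x := (lt_pairT_iff h x q).1 hc.1
    rcases eq_or_lt_of_le h1 with he | hlt
    · exact he
    · exact absurd (pairTstar_lt_pairT h x) (hc.2 hlt)
  · rintro rfl
    exact ⟨pairTstar_lt_pairT h x,
      fun z hz hz' => absurd ((lt_pairT_iff h x z).1 hz') (not_le_of_gt hz)⟩

lemma cjirr_pairT (h : IsTwoAcyclicFS r ont inj) (x : S) : CJIrr (pairT h x) :=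
  ⟨pairTstar h x, fun q => lt_pairT_iff h x q⟩

lemma eq_pairT_of_cjirr (h : IsTwoAcyclicFS r ont inj) {p : Pairs r} (hp : CJIrr p) : ∃ x, p = pairT h x := by
  obtain ⟨j', hj'⟩ := hp
  have hlt : j' < p := (hj' j').2 le_rfl
  have hss : j'.val.1 ⊆ p.val.1 := le_of_lt hlt
  obtain ⟨x, hxp, hxj⟩ : ∃ x, x ∈ p.val.1 ∧ x ∉ j'.val.1 := by
    by_contra hc
    push_neg at hc
    exact absurd (Pairs.ext1 (Set.Subset.antisymm hc hss)) (ne_of_gt hlt)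
  refine ⟨x, ?_⟩
  have hle : pairT h x ≤ p := fun x' hx' => mem_fst_down h hxp hx'
  rcases eq_or_lt_of_le hle with he | hl
  · exact he.symm
  · have hj : pairT h x ≤ j' := (hj' _).1 hl
    exact absurd (Pairs.le_iff.1 hj (ont_refl h x)) hxj

/- Dual part. -/

lemma perpL_Fset (h : IsTwoAcyclicFS r ont inj) (x : S) : perpL r (Fset inj x) = {w | ¬ r w x} := by
  ext w
  constructor
  · intro hw
    exact hw x (inj_refl h x)
  · intro hw v hv hr
    exact hw ((h.into_iff v x).1 hv w hr)

lemma perpR_perpL_Fset (h : IsTwoAcyclicFS r ont inj) (x : S) : perpR r {w | ¬ r w x} = Fset inj x := by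
  ext y
  constructor
  · intro hy
    refine (h.into_iff y x).2 fun z hz => ?_
    by_contra hc
    exact hy z hc hz
  · intro hy w hw hr
    exact hw ((h.into_iff y x).1 hy w hr)

/-- The pair `(^⊥F(x), F(x))`. -/
def pairF (h : IsTwoAcyclicFS r ont inj) (x : S) : Pairs r :=
  ⟨({w | ¬ r w x}, Fset inj x), (perpR_perpL_Fset h x).symm, (perpL_Fset h x).symm⟩

lemma x_mem_perpL_Fstar (h : IsTwoAcyclicFS r ont inj) (x : S) : x ∈ perpL r (Fset inj x \ {x}) := by
  intro v hv hr
  exact hv.2 (keyF h hv.1 hr)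

lemma Fstar_coclosed (h : IsTwoAcyclicFS r ont inj) (x : S) :
    perpR r (perpL r (Fset inj x \ {x})) = Fset inj x \ {x} := by
  apply Set.Subset.antisymm
  · intro v hv
    constructor
    · have h2 : perpR r (perpL r (Fset inj x \ {x})) ⊆ perpR r (perpL r (Fset inj x)) :=
        perpR_antitone' (perpL_antitone' Set.diff_subset)
      have hv2 := h2 hv
      rw [perpL_Fset h, perpR_perpL_Fset h] at hv2
      exact hv2
    · intro hvx
      simp only [Set.mem_singleton_iff] at hvx
      subst hvx
      exact (hv v (x_mem_perpL_Fstar h v)) (h.refl v)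
  · exact subset_perpR_perpL' _

/-- The pair `(^⊥F^*(x), F^*(x))`. -/
def pairFstar (h : IsTwoAcyclicFS r ont inj) (x : S) : Pairs r :=
  ⟨(perpL r (Fset inj x \ {x}), Fset inj x \ {x}), (Fstar_coclosed h x).symm, rfl⟩

lemma gt_pairF_iff (h : IsTwoAcyclicFS r ont inj) (x : S) (q : Pairs r) : pairF h x < q ↔ pairFstar h x ≤ q := by
  rw [Pairs.le_iff2]
  constructor
  · intro hlt
    have hle : q.val.2 ⊆ Fset inj x := Pairs.le_iff2.1 (le_of_lt hlt)
    intro y hy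
    refine ⟨hle hy, ?_⟩
    intro hyx
    simp only [Set.mem_singleton_iff] at hyx
    rw [hyx] at hy
    have hFq : Fset inj x ⊆ q.val.2 := fun y' hy' => mem_snd_down h hy hy'
    exact (ne_of_gt hlt) (Pairs.ext2 (Set.Subset.antisymm hle hFq))
  · intro hle
    have h1 : pairF h x ≤ q := Pairs.le_iff2.2 fun y hy => (hle hy).1
    rcases eq_or_lt_of_le h1 with he | hl
    · exfalso
      have hx : x ∈ q.val.2 := by rw [← he]; exact inj_refl h x
      exact (hle hx).2 rfl
    · exact hl

lemma pairF_lt_pairFstar (h : IsTwoAcyclicFS r ont inj) (x : S) : pairF h x < pairFstar h x :=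
  (gt_pairF_iff h x _).2 le_rfl

lemma covby_pairF_iff (h : IsTwoAcyclicFS r ont inj) (x : S) (q : Pairs r) : pairF h x ⋖ q ↔ q = pairFstar h x := by
  constructor
  · intro hc
    have h1 : pairFstar h x ≤ q := (gt_pairF_iff h x q).1 hc.1
    rcases eq_or_lt_of_le h1 with he | hlt
    · exact he.symm
    · exact absurd hlt (hc.2 (pairF_lt_pairFstar h x))
  · rintro rfl
    exact ⟨pairF_lt_pairFstar h x,
      fun z hz hz' => absurd ((gt_pairF_iff h x z).1 hz) (not_le_of_gt hz')⟩

lemma cmirr_pairF (h : IsTwoAcyclicFS r ont inj) (x : S) : CMIrr (pairF h x) :=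
  ⟨pairFstar h x, fun q => gt_pairF_iff h x q⟩

lemma eq_pairF_of_cmirr (h : IsTwoAcyclicFS r ont inj) {p : Pairs r} (hp : CMIrr p) : ∃ x, p = pairF h x := by
  obtain ⟨m', hm'⟩ := hp
  have hlt : p < m' := (hm' m').2 le_rfl
  have hss : m'.val.2 ⊆ p.val.2 := Pairs.le_iff2.1 (le_of_lt hlt)
  obtain ⟨x, hxp, hxm⟩ : ∃ x, x ∈ p.val.2 ∧ x ∉ m'.val.2 := by
    by_contra hc
    push_neg at hc
    exact absurd (Pairs.ext2 (Set.Subset.antisymm hc hss)) (ne_of_lt hlt)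
  refine ⟨x, ?_⟩
  have hle : p ≤ pairF h x := Pairs.le_iff2.2 fun y hy => mem_snd_down h hxp hy
  rcases eq_or_lt_of_le hle with he | hl
  · exact he
  · have hm : m' ≤ pairF h x := (hm' _).1 hl
    exact absurd (Pairs.le_iff2.1 hm (inj_refl h x)) hxm

end Aux

/-- Proposition 2.10: the completely join-irreducible elements of `Pairs(→)` are exactly the
pairs `(T(x), T(x)^⊥)`, the unique element covered by `(T(x), T(x)^⊥)` being
`(T⁎(x), T⁎(x)^⊥)`; dually, the completely meet-irreducible elements are exactly the pairs
`(^⊥F(x), F(x))`, the unique element covering `(^⊥F(x), F(x))` being `(^⊥F^*(x), F^*(x))`. -/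
theorem cji_cmi_of_pairs (S : Type u) (r ont inj : S → S → Prop)
    (h : IsTwoAcyclicFS r ont inj) :
    ((∀ x : S, ∃ p : Pairs r, p.val.1 = Tset ont x) ∧
     (∀ p : Pairs r, CJIrr p ↔ ∃ x : S, p.val.1 = Tset ont x) ∧
     (∀ (x : S) (p q : Pairs r), p.val.1 = Tset ont x →
        (q ⋖ p ↔ q.val.1 = Tset ont x \ {x}))) ∧
    ((∀ x : S, ∃ p : Pairs r, p.val.2 = Fset inj x) ∧
     (∀ p : Pairs r, CMIrr p ↔ ∃ x : S, p.val.2 = Fset inj x) ∧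
     (∀ (x : S) (p q : Pairs r), p.val.2 = Fset inj x →
        (p ⋖ q ↔ q.val.2 = Fset inj x \ {x}))) := by
  refine ⟨⟨fun x => ⟨pairT h x, rfl⟩, fun p => ?_, fun x p q hp1 => ?_⟩,
          fun x => ⟨pairF h x, rfl⟩, fun p => ?_, fun x p q hp2 => ?_⟩
  · constructor
    · intro hp
      obtain ⟨x, hx⟩ := eq_pairT_of_cjirr h hp
      exact ⟨x, by rw [hx]; rfl⟩
    · rintro ⟨x, hx⟩
      rw [Pairs.ext1 (p := p) (q := pairT h x) hx]
      exact cjirr_pairT h x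
  · rw [Pairs.ext1 (p := p) (q := pairT h x) hp1, covby_pairT_iff h x q]
    constructor
    · intro he; rw [he]; rfl
    · intro he; exact Pairs.ext1 he
  · constructor
    · intro hp
      obtain ⟨x, hx⟩ := eq_pairF_of_cmirr h hp
      exact ⟨x, by rw [hx]; rfl⟩
    · rintro ⟨x, hx⟩
      rw [Pairs.ext2 (p := p) (q := pairF h x) hx]
      exact cmirr_pairF h x
  · rw [Pairs.ext2 (p := p) (q := pairF h x) hp2, covby_pairF_iff h x q]
    constructor
    · intro he; rw [he]; rfl
    · intro he; exact Pairs.ext2 he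

end SDL
end

section
/- Let (Ш, →, ↠, ↪) be a two-acyclic factorization system and let x ∈ Ш. Then ^⊥F(x) is the maximum element in the set of closed subsets T of Ш satisfying T(x) ∩ T = T_*(x). -/
namespace SDL

lemma perpL_isClosed {S : Type*} (r : S → S → Prop) (Y : Set S) :
    IsClosedSet r (perpL r Y) := by
  apply subset_antisymm
  · intro z hz y hy
    exact hz y (fun t ht => ht y hy)
  · intro z hz w hw
    exact hw z hz

/-- Proposition 2.11: `^⊥F(x)` is the maximum element of the set of closed sets `T`
with `T(x) ∩ T = T⁎(x)`. -/
theorem perpL_Fset_greatest (S : Type u) (r ont inj : S → S → Prop)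
    (h : IsTwoAcyclicFS r ont inj) (x : S) :
    IsGreatest {T : Set S | IsClosedSet r T ∧ Tset ont x ∩ T = Tset ont x \ {x}}
      (perpL r (Fset inj x)) := by
  have ont_refl : ∀ a, ont a a := fun a => (h.onto_iff a a).mpr (fun z hz => hz)
  have inj_refl : ∀ a, inj a a := fun a => (h.into_iff a a).mpr (fun z hz => hz)
  constructor
  · refine ⟨perpL_isClosed r _, ?_⟩
    ext z
    constructor
    · rintro ⟨hz1, hz2⟩
      refine ⟨hz1, ?_⟩
      intro hzx
      subst hzx
      exact hz2 z (inj_refl z) (h.refl z)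
    · rintro ⟨hz1, hzne⟩
      refine ⟨hz1, ?_⟩
      intro y hy hr
      -- hy : y ∈ Fset inj x, i.e. inj y x ; hr : r z y
      have hrzx : r z x := ((h.into_iff y x).mp hy) z hr
      obtain ⟨w, hw1, hw2⟩ := (h.mult_iff z x).mp hrzx
      -- ont x w by transitivity through z
      have hxw : ont x w := (h.onto_iff x w).mpr
        (fun v hv => ((h.onto_iff x z).mp hz1) v (((h.onto_iff z w).mp hw1) v hv))
      have hwx : x = w := h.brick x w hxw hw2
      subst hwx
      exact hzne (h.onto_antisymm z x hw1 hz1)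
  · rintro T ⟨hTc, hTeq⟩ z hzT y hy hr
    -- hy : inj y x, hr : r z y
    have hrzx : r z x := ((h.into_iff y x).mp hy) z hr
    have hxnT : x ∉ T := by
      intro hxT
      have : x ∈ Tset ont x ∩ T := ⟨ont_refl x, hxT⟩
      rw [hTeq] at this
      exact this.2 rfl
    apply hxnT
    rw [← hTc]
    intro w hw
    intro hrxw
    obtain ⟨u, hu1, hu2⟩ := (h.mult_iff x w).mp hrxw
    by_cases hux : u = x
    · subst hux
      have hrzw : r z w := ((h.into_iff u w).mp hu2) z hrzx
      exact hw z hzT hrzw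
    · have huT : u ∈ T := by
        have : u ∈ Tset ont x \ {x} := ⟨hu1, hux⟩
        rw [← hTeq] at this
        exact this.2
      have hruw : r u w := (h.mult_iff u w).mpr ⟨u, ont_refl u, hu2⟩
      exact hw u huT hruw

end SDL
end

section
/- Suppose L is a finite lattice. Then: (1) L is meet semidistributive if and only if for every join-irreducible element j of L, the set {x ∈ L : j ∧ x = j_*} has a maximum element κ(j); (2) L is join semidistributive if and only if for every meet-irreducible element m of L, the set {x ∈ L : m ∨ x = m^*} has a minimum element κᵈ(m); (3) if L is semidistributive, then κ is a bijection from JIrr(L) to MIrr(L) with inverse κᵈ. -/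
namespace SDL


section AuxSDC

variable {L : Type*} [Lattice L] [Fintype L]

lemma meetSD_kappa (h : MeetSD L) (j j' : L) (hc : ∀ x : L, x < j ↔ x ≤ j') :
    ∃ k, IsGreatest {y : L | j ⊓ y = j'} k := by
  classical
  have hj' : j' < j := (hc j').mpr le_rfl
  have hfin : ({y : L | j ⊓ y = j'}).Finite := Set.toFinite _
  have hne : hfin.toFinset.Nonempty :=
    ⟨j', by simp [Set.Finite.mem_toFinset, inf_eq_right.mpr hj'.le]⟩
  refine ⟨hfin.toFinset.sup' hne id, ?_, fun y hy => ?_⟩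
  · exact Finset.sup'_induction (p := fun t => j ⊓ t = j') hne id
      (fun a ha b hb => (h j a b (ha.trans hb.symm)).trans ha)
      (fun b hb => hfin.mem_toFinset.mp hb)
  · exact Finset.le_sup' id (hfin.mem_toFinset.mpr hy)

lemma kappa_meetSD
    (H : ∀ j j' : L, (∀ x : L, x < j ↔ x ≤ j') → ∃ k, IsGreatest {y : L | j ⊓ y = j'} k) :
    MeetSD L := by
  classical
  intro x y z hxyz
  by_contra hne
  have hle : x ⊓ y ≤ x ⊓ (y ⊔ z) := le_inf inf_le_left (inf_le_right.trans le_sup_left)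
  have hT : ({w : L | w ≤ x ⊓ (y ⊔ z) ∧ ¬ w ≤ x ⊓ y}).Finite := Set.toFinite _
  have hTne : hT.toFinset.Nonempty := by
    refine ⟨x ⊓ (y ⊔ z), hT.mem_toFinset.mpr ⟨le_rfl, fun h' => hne (le_antisymm h' hle)⟩⟩
  obtain ⟨j, hjT, hjmin⟩ := hT.toFinset.exists_minimal hTne
  obtain ⟨hjle, hjnle⟩ := hT.mem_toFinset.mp hjT
  have : Nonempty L := ⟨j⟩
  set b : L := Finset.univ.inf' Finset.univ_nonempty id with hb
  have hbot : ∀ w : L, b ≤ w := fun w => Finset.inf'_le id (Finset.mem_univ w)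
  have hbj : b < j := lt_of_le_of_ne (hbot j) (fun h' => hjnle (h' ▸ hbot (x ⊓ y)))
  -- every element strictly below j is ≤ x ⊓ y
  have hbelow : ∀ u : L, u < j → u ≤ x ⊓ y := by
    intro u hu
    by_contra hu'
    exact hu.not_ge (hjmin (hT.mem_toFinset.mpr ⟨hu.le.trans hjle, hu'⟩) hu.le)
  have hF : ({u : L | u < j}).Finite := Set.toFinite _
  have hFne : hF.toFinset.Nonempty := ⟨b, hF.mem_toFinset.mpr hbj⟩
  set j' : L := hF.toFinset.sup' hFne id with hj'
  have hj'xy : j' ≤ x ⊓ y :=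
    Finset.sup'_le _ _ (fun u hu => hbelow u (hF.mem_toFinset.mp hu))
  have hj'j : j' < j := by
    refine lt_of_le_of_ne (Finset.sup'_le _ _ (fun u hu => (hF.mem_toFinset.mp hu).le)) ?_
    intro h'
    exact hjnle (h' ▸ hj'xy)
  have hcov : ∀ w : L, w < j ↔ w ≤ j' := by
    intro w
    constructor
    · intro hw; exact Finset.le_sup' id (hF.mem_toFinset.mpr hw)
    · intro hw; exact lt_of_le_of_lt hw hj'j
  obtain ⟨k, hkmem, hkub⟩ := H j j' hcov
  have hjx : j ≤ x := hjle.trans inf_le_left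
  have key : j ⊓ (x ⊓ y) = j' := by
    refine le_antisymm ((hcov _).mp (lt_of_le_of_ne inf_le_left ?_)) (le_inf hj'j.le hj'xy)
    intro h'
    exact hjnle (inf_eq_left.mp h')
  have hjy : j ⊓ y = j' := by
    rw [← key, ← inf_assoc, inf_eq_left.mpr hjx]
  have hjz : j ⊓ z = j' := by
    rw [show j ⊓ z = j ⊓ (x ⊓ z) by rw [← inf_assoc, inf_eq_left.mpr hjx], ← hxyz, key]
  have hyk : y ≤ k := hkub hjy
  have hzk : z ≤ k := hkub hjz
  have hjk : j ≤ k := (hjle.trans inf_le_right).trans (sup_le hyk hzk)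
  have : j ⊓ k = j' := hkmem
  rw [inf_eq_left.mpr hjk] at this
  exact absurd this hj'j.ne'

lemma joinSD_kappad (h : JoinSD L) (m m' : L) (hc : ∀ x : L, m < x ↔ m' ≤ x) :
    ∃ k, IsLeast {x : L | m ⊔ x = m'} k := by
  classical
  have hm' : m < m' := (hc m').mpr le_rfl
  have hfin : ({x : L | m ⊔ x = m'}).Finite := Set.toFinite _
  have hne : hfin.toFinset.Nonempty :=
    ⟨m', by simp [Set.Finite.mem_toFinset, sup_eq_right.mpr hm'.le]⟩
  refine ⟨hfin.toFinset.inf' hne id, ?_, fun y hy => ?_⟩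
  · exact Finset.inf'_induction (p := fun t => m ⊔ t = m') hne id
      (fun a ha b hb => (h m a b (ha.trans hb.symm)).trans ha)
      (fun b hb => hfin.mem_toFinset.mp hb)
  · exact Finset.inf'_le id (hfin.mem_toFinset.mpr hy)

lemma kappad_joinSD
    (H : ∀ m m' : L, (∀ x : L, m < x ↔ m' ≤ x) → ∃ k, IsLeast {x : L | m ⊔ x = m'} k) :
    JoinSD L := by
  classical
  intro x y z hxyz
  by_contra hne
  have hle : x ⊔ (y ⊓ z) ≤ x ⊔ y := sup_le le_sup_left (inf_le_left.trans le_sup_right)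
  have hT : ({w : L | x ⊔ (y ⊓ z) ≤ w ∧ ¬ x ⊔ y ≤ w}).Finite := Set.toFinite _
  have hTne : hT.toFinset.Nonempty :=
    ⟨x ⊔ (y ⊓ z), hT.mem_toFinset.mpr ⟨le_rfl, fun h' => hne (le_antisymm hle h')⟩⟩
  obtain ⟨m, hmT, hmmax⟩ := hT.toFinset.exists_maximal hTne
  obtain ⟨hmle, hmnle⟩ := hT.mem_toFinset.mp hmT
  have : Nonempty L := ⟨m⟩
  set t : L := Finset.univ.sup' Finset.univ_nonempty id with ht
  have htop : ∀ w : L, w ≤ t := fun w => Finset.le_sup' id (Finset.mem_univ w)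
  have hmt : m < t := lt_of_le_of_ne (htop m) (fun h' => hmnle (h' ▸ htop (x ⊔ y)))
  have habove : ∀ u : L, m < u → x ⊔ y ≤ u := by
    intro u hu
    by_contra hu'
    exact hu.not_ge (hmmax (hT.mem_toFinset.mpr ⟨hmle.trans hu.le, hu'⟩) hu.le)
  have hF : ({u : L | m < u}).Finite := Set.toFinite _
  have hFne : hF.toFinset.Nonempty := ⟨t, hF.mem_toFinset.mpr hmt⟩
  set m' : L := hF.toFinset.inf' hFne id with hm'
  have hm'xy : x ⊔ y ≤ m' :=
    Finset.le_inf' _ _ (fun u hu => habove u (hF.mem_toFinset.mp hu))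
  have hmm' : m < m' := by
    refine lt_of_le_of_ne (Finset.le_inf' _ _ (fun u hu => (hF.mem_toFinset.mp hu).le)) ?_
    intro h'
    exact hmnle (h' ▸ hm'xy)
  have hcov : ∀ w : L, m < w ↔ m' ≤ w := by
    intro w
    constructor
    · intro hw; exact Finset.inf'_le id (hF.mem_toFinset.mpr hw)
    · intro hw; exact lt_of_lt_of_le hmm' hw
  obtain ⟨j, hjmem, hjlb⟩ := H m m' hcov
  have hxm : x ≤ m := le_sup_left.trans hmle
  have key : m ⊔ (x ⊔ y) = m' := by
    refine le_antisymm (sup_le hmm'.le hm'xy)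
      ((hcov _).mp (lt_of_le_of_ne le_sup_left ?_))
    intro h'
    exact hmnle (sup_eq_left.mp h'.symm)
  have hmy : m ⊔ y = m' := by
    rw [← key, ← sup_assoc, sup_eq_left.mpr hxm]
  have hmz : m ⊔ z = m' := by
    rw [show m ⊔ z = m ⊔ (x ⊔ z) by rw [← sup_assoc, sup_eq_left.mpr hxm], ← hxyz, key]
  have hjy : j ≤ y := hjlb hmy
  have hjz : j ≤ z := hjlb hmz
  have hjm : j ≤ m := (le_inf hjy hjz).trans (le_sup_right.trans hmle)
  have : m ⊔ j = m' := hjmem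
  rw [sup_eq_left.mpr hjm] at this
  exact absurd this hmm'.ne

lemma part3a (hm : MeetSD L) (hj : JoinSD L) (j j' : L) (hc : ∀ x : L, x < j ↔ x ≤ j') :
    ∃ m m' : L, IsGreatest {y : L | j ⊓ y = j'} m ∧ (∀ x : L, m < x ↔ m' ≤ x) ∧
      IsLeast {x : L | m ⊔ x = m'} j := by
  obtain ⟨m, hmmem, hmub⟩ := meetSD_kappa hm j j' hc
  have hmmem' : j ⊓ m = j' := hmmem
  have hj'j : j' < j := (hc j').mpr le_rfl
  have hjm : ¬ j ≤ m := by
    intro h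
    exact hj'j.ne (hmmem'.symm.trans (inf_eq_left.mpr h))
  have hj'm : j' ≤ m := hmmem' ▸ inf_le_right
  refine ⟨m, m ⊔ j, ⟨hmmem, hmub⟩, ?_, ?_⟩
  · intro w
    constructor
    · intro hw
      have h1 : j' ≤ j ⊓ w := le_inf hj'j.le (hj'm.trans hw.le)
      have h2 : j ⊓ w ≠ j' := fun h => hw.not_ge (hmub h)
      have h3 : j ≤ w := by
        by_contra h
        have hlt : j ⊓ w < j := lt_of_le_of_ne inf_le_left (fun e => h (inf_eq_left.mp e))
        exact h2 (le_antisymm ((hc _).mp hlt) h1)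
      exact sup_le hw.le h3
    · intro hw
      refine lt_of_le_of_ne (le_sup_left.trans hw) ?_
      intro e
      exact hjm (e ▸ (le_sup_right.trans hw))
  · refine ⟨rfl, fun w hw => ?_⟩
    by_contra hjw
    have hlt : w ⊓ j < j := lt_of_le_of_ne inf_le_right (fun e => hjw (inf_eq_right.mp e))
    have h1 : m ⊔ (w ⊓ j) = m := sup_eq_left.mpr (((hc _).mp hlt).trans hj'm)
    have h2 : m ⊔ (w ⊓ j) = m ⊔ w := hj m w j hw
    have : m = m ⊔ j := (h1.symm.trans h2).trans hw
    exact hjm (le_sup_right.trans this.ge)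

lemma part3b (hm : MeetSD L) (hj : JoinSD L) (m m' : L) (hc : ∀ x : L, m < x ↔ m' ≤ x) :
    ∃ j j' : L, IsLeast {x : L | m ⊔ x = m'} j ∧ (∀ x : L, x < j ↔ x ≤ j') ∧
      IsGreatest {y : L | j ⊓ y = j'} m := by
  obtain ⟨j, hjmem, hjlb⟩ := joinSD_kappad hj m m' hc
  have hjmem' : m ⊔ j = m' := hjmem
  have hmm' : m < m' := (hc m').mpr le_rfl
  have hjm : ¬ j ≤ m := by
    intro h
    exact hmm'.ne (hjmem'.symm.trans (sup_eq_left.mpr h)).symm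
  have hmj' : j ≤ m' := hjmem' ▸ le_sup_right
  refine ⟨j, j ⊓ m, ⟨hjmem, hjlb⟩, ?_, ?_⟩
  · intro w
    constructor
    · intro hw
      have h1 : m ⊔ w ≤ m' := hjmem' ▸ sup_le le_sup_left (hw.le.trans le_sup_right)
      have h2 : m ⊔ w ≠ m' := fun h => hw.not_ge (hjlb h)
      have h3 : w ≤ m := by
        by_contra h
        have hlt : m < m ⊔ w := lt_of_le_of_ne le_sup_left (fun e => h (sup_eq_left.mp e.symm))
        exact h2 (le_antisymm h1 ((hc _).mp hlt))
      exact le_inf hw.le h3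
    · intro hw
      refine lt_of_le_of_ne (hw.trans inf_le_left) ?_
      intro e
      exact hjm (e ▸ (hw.trans inf_le_right))
  · refine ⟨rfl, fun w hw => ?_⟩
    by_contra hwm
    have hlt : m < w ⊔ m := lt_of_le_of_ne le_sup_right (fun e => hwm (sup_eq_right.mp e.symm))
    have h1 : j ⊓ (w ⊔ m) = j := inf_eq_left.mpr (hmj'.trans ((hc _).mp hlt))
    have h2 : j ⊓ (w ⊔ m) = j ⊓ w := hm j w m hw
    have : j = j ⊓ m := (h1.symm.trans h2).trans hw
    exact hjm (this.le.trans inf_le_right)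

end AuxSDC

/-- Theorem 2.16: a finite lattice is meet (resp. join) semidistributive iff `κ` (resp. `κᵈ`)
exists, and if semidistributive, `κ` and `κᵈ` are inverse bijections between the
join-irreducible and meet-irreducible elements. -/
theorem semidistrib_char (L : Type u) [Lattice L] [Fintype L] :
    (MeetSD L ↔
      ∀ j j' : L, (∀ x : L, x < j ↔ x ≤ j') → ∃ k, IsGreatest {y : L | j ⊓ y = j'} k) ∧
    (JoinSD L ↔
      ∀ m m' : L, (∀ x : L, m < x ↔ m' ≤ x) → ∃ k, IsLeast {x : L | m ⊔ x = m'} k) ∧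
    (MeetSD L → JoinSD L →
      (∀ j j' : L, (∀ x : L, x < j ↔ x ≤ j') →
        ∃ m m' : L, IsGreatest {y : L | j ⊓ y = j'} m ∧ (∀ x : L, m < x ↔ m' ≤ x) ∧
          IsLeast {x : L | m ⊔ x = m'} j) ∧
      (∀ m m' : L, (∀ x : L, m < x ↔ m' ≤ x) →
        ∃ j j' : L, IsLeast {x : L | m ⊔ x = m'} j ∧ (∀ x : L, x < j ↔ x ≤ j') ∧
          IsGreatest {y : L | j ⊓ y = j'} m)) := by
  refine ⟨⟨fun h j j' hc => meetSD_kappa h j j' hc, kappa_meetSD⟩,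
    ⟨fun h m m' hc => joinSD_kappad h m m' hc, kappad_joinSD⟩,
    fun hm hj => ⟨part3a hm hj, part3b hm hj⟩⟩

end SDL
end

section
/- If L is a completely semidistributive lattice and u ⋖ v is a cover relation in L, then the set {t ∈ L : t ∨ u = v} contains a minimum element ℓ, and this ℓ is completely join-irreducible with ℓ_* ≤ u. -/
namespace SDL

/-- Lemma 3.4 (join-irreducible labelling): in a completely semidistributive lattice,
for every cover `u ⋖ v` the set `{t | t ⊔ u = v}` has a minimum element `ℓ`, which is
completely join-irreducible with `ℓ⁎ ≤ u`. -/
theorem ji_labelling (L : Type u) [CompleteLattice L]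
    (h1 : CompletelyJoinSD L) (h2 : CompletelyMeetSD L)
    (u v : L) (huv : u ⋖ v) :
    ∃ l : L, IsLeast {t : L | t ⊔ u = v} l ∧
      ∃ l' : L, (∀ x : L, x < l ↔ x ≤ l') ∧ l' ≤ u := by
  set X : Set L := {t : L | t ⊔ u = v} with hX
  have hvX : v ∈ X := by
    simp only [hX, Set.mem_setOf_eq, sup_eq_left]
    exact huv.1.le
  have hlX : sInf X ∈ X := h1 X u v ⟨v, hvX⟩ (fun x hx => hx)
  have hleast : IsLeast X (sInf X) := ⟨hlX, fun x hx => sInf_le hx⟩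
  refine ⟨sInf X, hleast, sInf X ⊓ u, ?_, inf_le_right⟩
  have hnle : ¬ sInf X ≤ u := by
    intro h
    have : u = v := by
      have := hlX
      simp only [hX, Set.mem_setOf_eq] at this
      rw [sup_eq_right.2 h] at this
      exact this
    exact huv.1.ne this
  intro x
  constructor
  · intro hx
    refine le_inf hx.le ?_
    have hxuv : x ⊔ u ≤ v := by
      have : x ⊔ u ≤ sInf X ⊔ u := sup_le_sup_right hx.le u
      exact le_trans this (le_of_eq hlX)
    rcases huv.eq_or_eq le_sup_right hxuv with h | h
    · exact le_sup_left.trans h.le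
    · exact absurd (hleast.2 h) hx.not_ge
  · intro hx
    have hlt : sInf X ⊓ u < sInf X :=
      lt_of_le_of_ne inf_le_left (fun heq => hnle (le_of_inf_eq heq))
    exact lt_of_le_of_lt hx hlt

end SDL
end

section
/- If L is a completely semidistributive, cover-separated lattice and x ∈ L, then x = ⋁{j ∈ JIrr^c(L) : j ≤ x} = ⋀{m ∈ MIrr^c(L) : m ≥ x}. -/
namespace SDL

/-- Proposition 3.6: in a completely semidistributive, cover-separated lattice, every element
is the join of the completely join-irreducibles below it and the meet of the completely
meet-irreducibles above it. -/
theorem generated_by_irreducibles (L : Type u) [CompleteLattice L]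
    (h1 : CompletelyJoinSD L) (h2 : CompletelyMeetSD L)
    (hcs : ∀ w z : L, w < z → ∃ x y : L, w ≤ x ∧ x ⋖ y ∧ y ≤ z) (x : L) :
    x = sSup {j : L | CJIrr j ∧ j ≤ x} ∧ x = sInf {m : L | CMIrr m ∧ x ≤ m} := by
  have key1 : ∀ a b : L, a ⋖ b → ∃ j : L, CJIrr j ∧ j ≤ b ∧ ¬ j ≤ a := by
    intro a b hab
    set X : Set L := {w : L | w ⊔ a = b} with hX
    have hbX : b ∈ X := sup_eq_left.mpr hab.le
    have hj : sInf X ⊔ a = b := h1 X a b ⟨b, hbX⟩ (fun w hw => hw)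
    refine ⟨sInf X, ⟨sInf X ⊓ a, ?_⟩, le_trans le_sup_left hj.le, ?_⟩
    · intro w
      constructor
      · intro hw
        have hwa : w ⊔ a ≤ b := le_trans (sup_le_sup_right hw.le a) hj.le
        rcases hab.eq_or_eq le_sup_right hwa with h | h
        · exact le_inf hw.le (sup_eq_right.mp h)
        · exact absurd (sInf_le (show w ∈ X from h)) (not_le_of_gt hw)
      · intro hw
        refine lt_of_le_of_ne (hw.trans inf_le_left) ?_
        intro heq
        have : sInf X ≤ a := heq ▸ (hw.trans inf_le_right)
        exact hab.lt.ne ((sup_eq_right.mpr this).symm.trans hj)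
    · intro h
      exact hab.lt.ne ((sup_eq_right.mpr h).symm.trans hj)
  have key2 : ∀ a b : L, a ⋖ b → ∃ m : L, CMIrr m ∧ a ≤ m ∧ ¬ b ≤ m := by
    intro a b hab
    set X : Set L := {w : L | w ⊓ b = a} with hX
    have haX : a ∈ X := inf_eq_left.mpr hab.le
    have hm : sSup X ⊓ b = a := h2 X b a ⟨a, haX⟩ (fun w hw => hw)
    refine ⟨sSup X, ⟨sSup X ⊔ b, ?_⟩, le_trans hm.ge inf_le_left, ?_⟩
    · intro w
      constructor
      · intro hw
        have hwa : a ≤ w ⊓ b := le_trans hm.ge (inf_le_inf_right b hw.le)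
        rcases hab.eq_or_eq hwa inf_le_right with h | h
        · exact absurd (le_sSup (show w ∈ X from h)) (not_le_of_gt hw)
        · exact sup_le hw.le (inf_eq_right.mp h)
      · intro hw
        refine lt_of_lt_of_le ?_ hw
        refine lt_of_le_of_ne le_sup_left ?_
        intro h
        have : b ≤ sSup X := h ▸ le_sup_right
        exact hab.lt.ne' ((inf_eq_right.mpr this).symm.trans hm)
    · intro h
      exact hab.lt.ne' ((inf_eq_right.mpr h).symm.trans hm)
  constructor
  · have hle : sSup {j : L | CJIrr j ∧ j ≤ x} ≤ x := sSup_le fun j hj => hj.2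
    rcases eq_or_lt_of_le hle with h | h
    · exact h.symm
    · exfalso
      obtain ⟨a, b, hsa, hab, hbx⟩ := hcs _ _ h
      obtain ⟨j, hj, hjb, hja⟩ := key1 a b hab
      exact hja ((le_sSup (show j ∈ {j : L | CJIrr j ∧ j ≤ x} from ⟨hj, hjb.trans hbx⟩)).trans hsa)
  · have hle : x ≤ sInf {m : L | CMIrr m ∧ x ≤ m} := le_sInf fun m hm => hm.2
    rcases eq_or_lt_of_le hle with h | h
    · exact h
    · exfalso
      obtain ⟨a, b, hxa, hab, hbt⟩ := hcs _ _ h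
      obtain ⟨m, hm, ham, hbm⟩ := key2 a b hab
      exact hbm (hbt.trans (sInf_le (show m ∈ {m : L | CMIrr m ∧ x ≤ m} from ⟨hm, hxa.trans ham⟩)))

end SDL
end

section
/- Let (Ш, →, ↠, ↪) be a finite two-acyclic factorization system and let X be a closed set. Then the canonical join representation of X in the lattice of closed sets is {T(c) : c ∈ Cov(X)}. -/
namespace SDL


section Aux

variable {S : Type*} {r ont inj : S → S → Prop}

/-- Membership in the closure `^⊥(A^⊥)`. -/
lemma mem_cl {A : Set S} {y : S} :
    y ∈ perpL r (perpR r A) ↔ ∀ z, r y z → ∃ a ∈ A, r a z := by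
  constructor
  · intro hy z hz
    by_contra hc
    push_neg at hc
    exact hy z (fun a ha => hc a ha) hz
  · intro hy z hzA hyz
    obtain ⟨a, ha, har⟩ := hy z hyz
    exact hzA a ha har

lemma subset_cl {A : Set S} : A ⊆ perpL r (perpR r A) :=
  fun a ha => mem_cl.2 (fun z hz => ⟨a, ha, hz⟩)

lemma cl_mono {A B : Set S} (hAB : A ⊆ B) :
    perpL r (perpR r A) ⊆ perpL r (perpR r B) := by
  intro y hy
  rw [mem_cl] at hy ⊢
  intro z hz
  obtain ⟨a, ha, har⟩ := hy z hz
  exact ⟨a, hAB ha, har⟩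

lemma cl_isClosed (A : Set S) : IsClosedSet r (perpL r (perpR r A)) := by
  apply Set.Subset.antisymm _ subset_cl
  intro y hy
  rw [mem_cl] at hy ⊢
  intro z hz
  obtain ⟨a, ha, har⟩ := hy z hz
  exact mem_cl.1 ha z har

lemma mem_closed_iff {X : Set S} (hX : IsClosedSet r X) {y : S} :
    y ∈ X ↔ ∀ z, r y z → ∃ a ∈ X, r a z := by
  conv_lhs => rw [← hX]
  exact mem_cl

namespace IsTwoAcyclicFS

variable (h : IsTwoAcyclicFS r ont inj)
include h

lemma ont_refl (x : S) : ont x x := (h.onto_iff x x).2 (fun _ hz => hz)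

lemma ont_trans {x y z : S} (hxy : ont x y) (hyz : ont y z) : ont x z :=
  (h.onto_iff x z).2 (fun w hw => (h.onto_iff x y).1 hxy w ((h.onto_iff y z).1 hyz w hw))

lemma r_of_ont {x y : S} (hxy : ont x y) : r x y :=
  (h.onto_iff x y).1 hxy y (h.refl y)

lemma r_of_inj {x y : S} (hxy : inj x y) : r x y :=
  (h.into_iff x y).1 hxy x (h.refl x)

lemma r_ont_left {x y z : S} (hxy : ont x y) (hyz : r y z) : r x z :=
  (h.onto_iff x y).1 hxy z hyz

lemma r_inj_right {x y z : S} (hxy : r x y) (hyz : inj y z) : r x z :=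
  (h.into_iff y z).1 hyz x hxy

lemma factor {x z : S} (hxz : r x z) : ∃ v, ont x v ∧ inj v z :=
  (h.mult_iff x z).1 hxz

lemma downclosed {X : Set S} (hX : IsClosedSet r X) {x y : S}
    (hx : x ∈ X) (hxy : ont x y) : y ∈ X :=
  (mem_closed_iff hX).2 (fun z hz => ⟨x, hx, h.r_ont_left hxy hz⟩)

lemma tset_closed (c : S) : IsClosedSet r (Tset ont c) := by
  apply Set.Subset.antisymm _ subset_cl
  intro y hy
  rw [mem_cl] at hy
  refine (h.onto_iff c y).2 (fun z hz => ?_)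
  obtain ⟨a, ha, har⟩ := hy z hz
  exact h.r_ont_left ha har

end IsTwoAcyclicFS

/-- In a finite type, any nonempty set has a minimal element with respect to a
transitive antisymmetric relation. -/
lemma exists_min_rel {T : Type*} [Finite T] (p : T → T → Prop)
    (ptrans : ∀ a b c, p a b → p b c → p a c)
    (pantisymm : ∀ a b, p a b → p b a → a = b)
    {Z : Set T} (hZ : Z.Nonempty) : ∃ z ∈ Z, ∀ w ∈ Z, p w z → w = z := by
  let q : T → T → Prop := fun a b => p a b ∧ a ≠ b
  haveI : IsTrans T q := ⟨fun a b c hab hbc => by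
    refine ⟨ptrans _ _ _ hab.1 hbc.1, fun hac => ?_⟩
    exact hbc.2 (pantisymm _ _ hbc.1 (hac ▸ hab.1))⟩
  haveI : IsIrrefl T q := ⟨fun a ha => ha.2 rfl⟩
  have hwf : WellFounded q := Finite.wellFounded_of_trans_of_irrefl q
  obtain ⟨z, hz, hmin⟩ := hwf.has_min Z hZ
  refine ⟨z, hz, fun w hw hpw => ?_⟩
  by_contra hne
  exact hmin w hw ⟨hpw, hne⟩

/-- Lemma B: each covering pair of closed sets yields a cover element. -/
lemma exists_cover_elt [Finite S] (h : IsTwoAcyclicFS r ont inj) {X M : Set S}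
    (hX : IsClosedSet r X) (hM : IsClosedSet r M) (hMX : M ⊆ X) (hne : M ≠ X)
    (hcov : ∀ Y : Set S, IsClosedSet r Y → M ⊆ Y → Y ⊆ X → Y = M ∨ Y = X) :
    ∃ c ∈ CovS r ont X, c ∉ M := by
  classical
  -- the set Z = M^⊥ \ X^⊥ is nonempty
  have hsub : perpR r X ⊆ perpR r M := fun z hz a ha => hz a (hMX ha)
  set Z : Set S := perpR r M \ perpR r X with hZdef
  have hZne : Z.Nonempty := by
    rw [Set.sdiff_nonempty]
    intro hcontra
    apply hne
    rw [← hM, ← hX]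
    have : perpR r M = perpR r X := Set.Subset.antisymm hcontra hsub
    rw [this]
  -- choose c₀ ∈ Z minimal with respect to inj
  obtain ⟨c₀, hc₀Z, hc₀min⟩ := exists_min_rel inj
    (fun a b c hab hbc => (h.into_iff a c).2
      (fun w hw => (h.into_iff b c).1 hbc w ((h.into_iff a b).1 hab w hw)))
    h.into_antisymm hZne
  -- c₀ ∈ X \ M
  have hc₀X : c₀ ∈ X := by
    have : ¬ (∀ x ∈ X, ¬ r x c₀) := hc₀Z.2
    push_neg at this
    obtain ⟨x, hx, hrx⟩ := this
    obtain ⟨v, hov, hiv⟩ := h.factor hrx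
    have hvX : v ∈ X := h.downclosed hX hx hov
    have hvZ : v ∈ Z := by
      constructor
      · intro a ha hrav
        exact hc₀Z.1 a ha (h.r_inj_right hrav hiv)
      · intro hv
        exact hv v hvX (h.refl v)
    have := hc₀min v hvZ hiv
    rwa [← this]
  have hc₀M : c₀ ∉ M := fun hcM => hc₀Z.1 c₀ hcM (h.refl c₀)
  -- M' = Del(X, c₀) is closed
  have hM'closed : IsClosedSet r (Del ont X c₀) := by
    apply Set.Subset.antisymm _ subset_cl
    intro y hy
    have hyX : y ∈ X := by
      rw [← hX]
      exact cl_mono Set.diff_subset hy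
    refine ⟨hyX, fun (hyc : ont y c₀) => ?_⟩
    have hryc : r y c₀ := h.r_of_ont hyc
    obtain ⟨m, hm, hrm⟩ := mem_cl.1 hy c₀ hryc
    obtain ⟨v, hov, hiv⟩ := h.factor hrm
    by_cases hvM : v ∈ M
    · exact hc₀Z.1 v hvM (h.r_of_inj hiv)
    · have hvZ : v ∈ Z := by
        constructor
        · intro a ha hrav
          exact hc₀Z.1 a ha (h.r_inj_right hrav hiv)
        · intro hv
          exact hv v (h.downclosed hX hm.1 hov) (h.refl v)
      have hveq := hc₀min v hvZ hiv
      rw [hveq] at hov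
      exact hm.2 hov
  -- M ⊆ Del(X, c₀), Del ≠ X, so Del = M by the covering property
  have hMsub : M ⊆ Del ont X c₀ := by
    intro a ha
    refine ⟨hMX ha, fun (hac : ont a c₀) => ?_⟩
    exact hc₀M (h.downclosed hM ha hac)
  have hDelX : Del ont X c₀ ≠ X := by
    intro hcontra
    have : c₀ ∈ Del ont X c₀ := by rw [hcontra]; exact hc₀X
    exact this.2 (h.ont_refl c₀)
  have hDelM : Del ont X c₀ = M := by
    rcases hcov (Del ont X c₀) hM'closed hMsub Set.diff_subset with h1 | h1
    · exact h1
    · exact absurd h1 hDelX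
  -- cl(Del ∪ {c₀}) = X
  have hclosure : perpL r (perpR r (Del ont X c₀ ∪ {c₀})) = X := by
    set C := perpL r (perpR r (Del ont X c₀ ∪ {c₀})) with hC
    have hCclosed : IsClosedSet r C := cl_isClosed _
    have hMC : M ⊆ C := fun a ha => subset_cl (Set.mem_union_left _ (hDelM ▸ ha))
    have hCX : C ⊆ X := by
      rw [← hX]
      apply cl_mono
      intro a ha
      rcases ha with ha | ha
      · exact ha.1
      · rw [ha]; exact hc₀X
    rcases hcov C hCclosed hMC hCX with h1 | h1
    · exfalso
      have : c₀ ∈ C := subset_cl (Set.mem_union_right _ rfl)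
      rw [h1] at this
      exact hc₀M this
    · exact h1
  exact ⟨c₀, ⟨hc₀X, hM'closed, hclosure⟩, hc₀M⟩

/-- Lemma A: for `y ∈ X` closed and `y → z`, there is a cover element `c` of `X`
with `c → z`. -/
lemma exists_cov_rel [Finite S] (h : IsTwoAcyclicFS r ont inj) {X : Set S}
    (hX : IsClosedSet r X) {y z : S} (hy : y ∈ X) (hyz : r y z) :
    ∃ c ∈ CovS r ont X, r c z := by
  classical
  set W : Set S := {w ∈ X | ¬ r w z} with hWdef
  have hWclosed : IsClosedSet r W := by
    apply Set.Subset.antisymm _ subset_cl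
    intro w hw
    have hwX : w ∈ X := by
      rw [← hX]
      exact cl_mono (Set.sep_subset _ _) hw
    refine ⟨hwX, fun hrwz => ?_⟩
    obtain ⟨a, ha, har⟩ := mem_cl.1 hw z hrwz
    exact ha.2 har
  have hWX : W ⊆ X := Set.sep_subset _ _
  have hWne : W ≠ X := by
    intro hcontra
    have : y ∈ W := hcontra ▸ hy
    exact this.2 hyz
  -- choose a maximal closed proper subset M of X containing W
  have : ∃ M ∈ {M : Set S | IsClosedSet r M ∧ W ⊆ M ∧ M ⊆ X ∧ M ≠ X},
      ∀ M' ∈ {M : Set S | IsClosedSet r M ∧ W ⊆ M ∧ M ⊆ X ∧ M ≠ X},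
        (fun A B : Set S => B ⊆ A) M' M → M' = M := by
    apply exists_min_rel (fun A B : Set S => B ⊆ A)
      (fun a b c hab hbc => hbc.trans hab)
      (fun a b hab hba => Set.Subset.antisymm hba hab)
    exact ⟨W, hWclosed, Set.Subset.rfl, hWX, hWne⟩
  obtain ⟨M, ⟨hMclosed, hWM, hMX, hMne⟩, hMmax⟩ := this
  have hcov : ∀ Y : Set S, IsClosedSet r Y → M ⊆ Y → Y ⊆ X → Y = M ∨ Y = X := by
    intro Y hYc hMY hYX
    by_cases hYX' : Y = X
    · exact Or.inr hYX'
    · exact Or.inl (hMmax Y ⟨hYc, hWM.trans hMY, hYX, hYX'⟩ hMY)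
  obtain ⟨c, hcCov, hcM⟩ := exists_cover_elt h hX hMclosed hMX hMne hcov
  refine ⟨c, hcCov, ?_⟩
  by_contra hrcz
  exact hcM (hWM ⟨hcCov.1, hrcz⟩)

end Aux

/-- Theorem 5.11: in a finite two-acyclic factorization system, the canonical join
representation of a closed set `X` is `{T(c) : c ∈ Cov(X)}`. -/
theorem canonical_join_rep_of_closed (S : Type u) [Fintype S] (r ont inj : S → S → Prop)
    (h : IsTwoAcyclicFS r ont inj) (X : Closeds r) :
    IsCanonicalJoinRep {Y : Closeds r | ∃ c ∈ CovS r ont X.val, Y.val = Tset ont c} X := by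
  classical
  have hXc : IsClosedSet r X.val := X.prop
  constructor
  · -- IsLUB
    constructor
    · -- upper bound
      rintro Y ⟨c, hc, hYval⟩
      show Y.val ⊆ X.val
      rw [hYval]
      intro x' hx'
      exact h.downclosed hXc hc.1 hx'
    · -- least
      intro Z hZ
      show X.val ⊆ Z.val
      intro y hy
      rw [mem_closed_iff Z.prop]
      intro z hz
      obtain ⟨c, hcCov, hcz⟩ := exists_cov_rel h hXc hy hz
      have hTc : (⟨Tset ont c, h.tset_closed c⟩ : Closeds r) ∈
          {Y : Closeds r | ∃ c ∈ CovS r ont X.val, Y.val = Tset ont c} := ⟨c, hcCov, rfl⟩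
      have hsub : Tset ont c ⊆ Z.val := hZ hTc
      exact ⟨c, hsub (h.ont_refl c), hcz⟩
  constructor
  · -- minimality
    rintro s' hs' Y ⟨c, hcCov, hYval⟩
    by_cases hex : ∃ B ∈ s', c ∈ B.val
    · obtain ⟨B, hB, hcB⟩ := hex
      refine ⟨B, hB, ?_⟩
      show Y.val ⊆ B.val
      rw [hYval]
      intro x' hx'
      exact h.downclosed B.prop hcB hx'
    · exfalso
      push_neg at hex
      have hDub : (⟨Del ont X.val c, hcCov.2.1⟩ : Closeds r) ∈ upperBounds s' := by
        intro B hB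
        show B.val ⊆ Del ont X.val c
        intro x hx
        refine ⟨hs'.1 hB hx, fun (hxc : ont x c) => ?_⟩
        exact hex B hB (h.downclosed B.prop hx hxc)
      have hXle := hs'.2 hDub
      have : c ∈ Del ont X.val c := hXle hcCov.1
      exact this.2 (h.ont_refl c)
  · -- antichain
    rintro Y₁ ⟨c, hcCov, hY₁⟩ Y₂ ⟨c', hc'Cov, hY₂⟩ hne hle
    have hsub : Tset ont c ⊆ Tset ont c' := by
      rw [← hY₁, ← hY₂]; exact hle
    have hcc' : ont c' c := hsub (h.ont_refl c)
    have hne' : c ≠ c' := by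
      intro hcontra
      apply hne
      apply Subtype.ext
      rw [hY₁, hY₂, hcontra]
    have hnc : ¬ ont c c' := fun hx => hne' (h.onto_antisymm _ _ hx hcc')
    have hcD' : c ∈ Del ont X.val c' := ⟨hcCov.1, hnc⟩
    have hDD' : Del ont X.val c ∪ {c} ⊆ Del ont X.val c' := by
      intro x hx
      rcases hx with hx | hx
      · exact ⟨hx.1, fun (hxc' : ont x c') => hx.2 (h.ont_trans hxc' hcc')⟩
      · rw [hx]; exact hcD'
    have : X.val ⊆ Del ont X.val c' := by
      conv_lhs => rw [← hcCov.2.2]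
      have hm := cl_mono (r := r) hDD'
      rwa [hc'Cov.2.1] at hm
    have hc' : c' ∈ Del ont X.val c' := this hc'Cov.1
    exact hc'.2 (h.ont_refl c')

end SDL
end
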